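/- Let μ, ν be finite measures in M^p and r ≥ μ(Ω) + ν(Ω). Set μ̃ = μ + (r − μ(Ω))δ_∂Ω and ν̃ = ν + (r − ν(Ω))δ_∂Ω, measures of common mass r on the quotient space Ω̃ = Ω ⊔ {∂Ω} with metric ρ(x,y) = min{d(x,y), d(x,∂Ω)+d(y,∂Ω)}. Then OT_p(μ,ν) = W_{p,ρ}(μ̃, ν̃), where W_{p,ρ} is the p-Wasserstein distance on (Ω̃, ρ) between measures of equal mass. -/

import Mathlib

noncomputable section

open MeasureTheory Metric Set Filter Topology ENNReal
open scoped Classical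

/-- The plane with the Euclidean distance. -/
abbrev Pt : Type := EuclideanSpace ℝ (Fin 2)

/-- Build a point of the plane from coordinates. -/
def mk2 (a b : ℝ) : Pt := (WithLp.equiv 2 (Fin 2 → ℝ)).symm ![a, b]

/-- The open upper half-plane Ω = {(t₁,t₂) : t₂ > t₁}. -/
def UHP : Set Pt := {x | x 0 < x 1}

/-- The diagonal ∂Ω = {(t,t)}. -/
def Diag : Set Pt := {x | x 0 = x 1}

/-- Ω̄ = Ω ∪ ∂Ω. -/
def UHPbar : Set Pt := UHP ∪ Diag

/-- Distance from a point to the diagonal. -/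
def persDist (x : Pt) : ℝ := infDist x Diag

/-- p-th total persistence Pers_p(μ) = ∫_Ω d(x,∂Ω)^p dμ(x). -/
def Pers (p : ℝ) (μ : Measure Pt) : ℝ≥0∞ :=
  ∫⁻ x in UHP, ENNReal.ofReal (persDist x ^ p) ∂μ

/-- μ ∈ M^p : a measure supported on Ω with finite p-th persistence. -/
def MemMp (p : ℝ) (μ : Measure Pt) : Prop := μ UHPᶜ = 0 ∧ Pers p μ < ⊤

/-- Admissible partial transport plans between μ and ν: measures on Ω̄ × Ω̄ whose
marginals restricted to Ω are μ and ν. -/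
def Adm (μ ν : Measure Pt) : Set (Measure (Pt × Pt)) :=
  {π | π ((UHPbar ×ˢ UHPbar)ᶜ) = 0 ∧
    (∀ A : Set Pt, MeasurableSet A → A ⊆ UHP → π (A ×ˢ univ) = μ A) ∧
    (∀ B : Set Pt, MeasurableSet B → B ⊆ UHP → π (univ ×ˢ B) = ν B)}

/-- Cost C_p(π) = ∬ d(x,y)^p dπ(x,y). -/
def Cost (p : ℝ) (π : Measure (Pt × Pt)) : ℝ≥0∞ :=
  ∫⁻ z, ENNReal.ofReal (dist z.1 z.2 ^ p) ∂π

/-- OT_p(μ,ν)^p, as an extended real. -/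
def OTe (p : ℝ) (μ ν : Measure Pt) : ℝ≥0∞ := ⨅ π ∈ Adm μ ν, Cost p π

/-- The optimal partial transport distance OT_p(μ,ν). -/
def OT (p : ℝ) (μ ν : Measure Pt) : ℝ := (OTe p μ ν ^ (1 / p)).toReal

/-- Optimal plans. -/
def OptSet (p : ℝ) (μ ν : Measure Pt) : Set (Measure (Pt × Pt)) :=
  {π | π ∈ Adm μ ν ∧ Cost p π = OTe p μ ν}

/-- Vague convergence of measures on Ω: convergence of integrals of continuous
functions compactly supported in Ω. -/
def VagueTendsto (μs : ℕ → Measure Pt) (μ : Measure Pt) : Prop :=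
  ∀ f : Pt → ℝ, Continuous f → HasCompactSupport f → tsupport f ⊆ UHP →
    Tendsto (fun n => ∫ x, f x ∂(μs n)) atTop (𝓝 (∫ x, f x ∂μ))

/-- E_Ω = (Ω̄ × Ω̄) \ (∂Ω × ∂Ω). -/
def EOm : Set (Pt × Pt) := (UHPbar ×ˢ UHPbar) \ (Diag ×ˢ Diag)

/-- Vague convergence of plans on E_Ω. -/
def VaguePlanTendsto (πs : ℕ → Measure (Pt × Pt)) (π : Measure (Pt × Pt)) : Prop :=
  ∀ f : Pt × Pt → ℝ, Continuous f → HasCompactSupport f → tsupport f ⊆ EOm →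
    Tendsto (fun n => ∫ z, f z ∂(πs n)) atTop (𝓝 (∫ z, f z ∂π))

/-- A persistence diagram: an ℕ-valued point measure Σ_{x ∈ X} n_x δ_x with
X ⊆ Ω locally finite in Ω. -/
def IsDiagram (μ : Measure Pt) : Prop :=
  ∃ (X : Set Pt) (n : Pt → ℕ), X ⊆ UHP ∧
    (∀ x ∈ UHP, ∃ U ∈ 𝓝 x, (X ∩ U).Finite) ∧
    μ = Measure.sum (fun x : X => (n x.1 : ℝ≥0∞) • Measure.dirac (x.1 : Pt))

/-- Support of a measure on Pt × Pt. -/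
def msupp (π : Measure (Pt × Pt)) : Set (Pt × Pt) := {z | ∀ U ∈ 𝓝 z, π U ≠ 0}

/-- Support of a measure on Pt. -/
def suppM (μ : Measure Pt) : Set Pt := {x | ∀ U ∈ 𝓝 x, μ U ≠ 0}

/-- Bottleneck cost of a plan: sup of d(x,y) over the support. -/
def CostInf (π : Measure (Pt × Pt)) : ℝ≥0∞ :=
  ⨆ z ∈ msupp π, ENNReal.ofReal (dist z.1 z.2)

/-- The bottleneck (∞) optimal partial transport distance, as extended real. -/
def OTinfE (μ ν : Measure Pt) : ℝ≥0∞ := ⨅ π ∈ Adm μ ν, CostInf π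

/-- μ ∈ M^∞ : support at bounded distance from the diagonal. -/
def MemMinf (μ : Measure Pt) : Prop :=
  μ UHPᶜ = 0 ∧ ∃ C : ℝ, ∀ x ∈ suppM μ, persDist x ≤ C

/-- A partial matching between two indexed families: a bijection between
subsets of the index sets; unmatched points are sent to the diagonal. -/
structure Matching (ι κ : Type*) where
  I : Set ι
  J : Set κ
  e : I ≃ J

/-- Cost of a partial matching for d_p (as the p-th power, extended real). -/
def mCost (p : ℝ) {ι κ : Type*} (x : ι → Pt) (y : κ → Pt) (m : Matching ι κ) : ℝ≥0∞ :=
  (∑' i : m.I, ENNReal.ofReal (dist (x i.1) (y (m.e i).1) ^ p))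
  + (∑' i : ↥(m.Iᶜ), ENNReal.ofReal (persDist (x i.1) ^ p))
  + (∑' j : ↥(m.Jᶜ), ENNReal.ofReal (persDist (y j.1) ^ p))

/-- Bottleneck cost of a partial matching. -/
def mCostInf {ι κ : Type*} (x : ι → Pt) (y : κ → Pt) (m : Matching ι κ) : ℝ≥0∞ :=
  (⨆ i : m.I, ENNReal.ofReal (dist (x i.1) (y (m.e i).1)))
  ⊔ (⨆ i : ↥(m.Iᶜ), ENNReal.ofReal (persDist (x i.1)))
  ⊔ (⨆ j : ↥(m.Jᶜ), ENNReal.ofReal (persDist (y j.1)))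

/-- The point measure associated to an indexed family of points. -/
def famMeasure {ι : Type*} (x : ι → Pt) : Measure Pt :=
  Measure.sum (fun i => Measure.dirac (x i))

/-- The weighted measure μ^p, with density d(x,∂Ω)^p with respect to μ. -/
def wgt (p : ℝ) (μ : Measure Pt) : Measure Pt :=
  μ.withDensity (fun x => ENNReal.ofReal (persDist x ^ p))

/-- The quotient space Ω̃ = Ω ⊔ {∂Ω}. -/
def Qt : Type := Option ↥UHP

/-- The quotient metric ρ on Ω̃. -/
def ρQ : Qt → Qt → ℝ
  | some x, some y => min (dist (x : Pt) (y : Pt)) (persDist x + persDist y)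
  | some x, none => persDist x
  | none, some y => persDist y
  | none, none => 0

/-- The quotient metric ρ viewed on the plane, all diagonal points being
identified. -/
def ρP (x y : Pt) : ℝ :=
  if x ∈ Diag then (if y ∈ Diag then 0 else persDist y)
  else if y ∈ Diag then persDist x
  else min (dist x y) (persDist x + persDist y)

/-- Couplings with full (equal-mass) marginals. -/
def Coup (μ ν : Measure Pt) : Set (Measure (Pt × Pt)) :=
  {π | π.map Prod.fst = μ ∧ π.map Prod.snd = ν}

/-- The p-Wasserstein distance (to the p) for the quotient metric ρ. -/
def WpE (p : ℝ) (μ ν : Measure Pt) : ℝ≥0∞ :=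
  ⨅ π ∈ Coup μ ν, ∫⁻ z, ENNReal.ofReal (ρP z.1 z.2 ^ p) ∂π


-- basic facts
lemma mk2_apply0 (a b : ℝ) : (mk2 a b) 0 = a := rfl
lemma mk2_apply1 (a b : ℝ) : (mk2 a b) 1 = b := rfl

lemma zero_mem_Diag : mk2 0 0 ∈ Diag := by simp [Diag, mk2_apply0, mk2_apply1]

lemma zero_not_mem_UHP : mk2 0 0 ∉ UHP := by
  simp [UHP, mk2_apply0, mk2_apply1]

lemma UHP_inter_Diag : UHP ∩ Diag = ∅ := by
  ext x; simp only [mem_inter_iff, UHP, Diag, mem_setOf_eq, mem_empty_iff_false, iff_false]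
  rintro ⟨h1, h2⟩; exact absurd h2 (ne_of_lt h1)

lemma not_mem_Diag_of_UHP {x : Pt} (hx : x ∈ UHP) : x ∉ Diag := by
  intro h; have := UHP_inter_Diag; rw [eq_empty_iff_forall_notMem] at this
  exact this x ⟨hx, h⟩

lemma continuous_eval0 : Continuous (fun x : Pt => x 0) :=
  (EuclideanSpace.proj (0 : Fin 2)).continuous
lemma continuous_eval1 : Continuous (fun x : Pt => x 1) :=
  (EuclideanSpace.proj (1 : Fin 2)).continuous

lemma isOpen_UHP : IsOpen UHP := isOpen_lt continuous_eval0 continuous_eval1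
lemma isClosed_Diag : IsClosed Diag :=
  isClosed_eq continuous_eval0 continuous_eval1
lemma measurableSet_UHP : MeasurableSet UHP := isOpen_UHP.measurableSet
lemma measurableSet_Diag : MeasurableSet Diag := isClosed_Diag.measurableSet
lemma measurableSet_UHPbar : MeasurableSet UHPbar :=
  measurableSet_UHP.union measurableSet_Diag

lemma Diag_nonempty : Diag.Nonempty := ⟨mk2 0 0, zero_mem_Diag⟩

-- projection to the diagonal
def Pr (x : Pt) : Pt := mk2 ((x 0 + x 1) / 2) ((x 0 + x 1) / 2)

lemma Pr_mem_Diag (x : Pt) : Pr x ∈ Diag := by simp [Diag, Pr, mk2_apply0, mk2_apply1]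

lemma Pr_eq_self {x : Pt} (hx : x ∈ Diag) : Pr x = x := by
  have h : x 0 = x 1 := hx
  apply (WithLp.equiv 2 (Fin 2 → ℝ)).injective
  funext i
  fin_cases i <;> simp [Pr, mk2, h] <;> ring

lemma continuous_mk2diag : Continuous (fun t : ℝ => mk2 t t) := by
  have : Continuous (fun t : ℝ => (![t, t] : Fin 2 → ℝ)) := by
    apply continuous_pi; intro i; fin_cases i <;> simpa using continuous_id'
  exact (PiLp.continuous_toLp 2 (fun _ : Fin 2 => ℝ)).comp this

lemma continuous_Pr : Continuous Pr := by
  have : Continuous (fun x : Pt => (x 0 + x 1) / 2) :=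
    (continuous_eval0.add continuous_eval1).div_const 2
  exact continuous_mk2diag.comp this

lemma dist_mk2 (a b c d : ℝ) : dist (mk2 a b) (mk2 c d)
    = Real.sqrt ((a - c) ^ 2 + (b - d) ^ 2) := by
  rw [EuclideanSpace.dist_eq]
  simp [Fin.sum_univ_two, mk2_apply0, mk2_apply1, Real.dist_eq, sq_abs]

lemma dist_eq_pt (x y : Pt) : dist x y
    = Real.sqrt ((x 0 - y 0) ^ 2 + (x 1 - y 1) ^ 2) := by
  rw [EuclideanSpace.dist_eq]
  simp [Fin.sum_univ_two, Real.dist_eq, sq_abs]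

lemma persDist_eq_dist_Pr (x : Pt) : persDist x = dist x (Pr x) := by
  apply le_antisymm (infDist_le_dist_of_mem (Pr_mem_Diag x))
  · -- dist x (Pr x) ≤ infDist
    apply le_of_not_gt
    rw [infDist_lt_iff Diag_nonempty]
    rintro ⟨y, hy, hlt⟩
    have hy' : y 0 = y 1 := hy
    have h1 : dist x (Pr x) = Real.sqrt ((x 0 - (x 0 + x 1)/2)^2 + (x 1 - (x 0 + x 1)/2)^2) := by
      rw [dist_eq_pt]; rfl
    have h2 : dist x y = Real.sqrt ((x 0 - y 0)^2 + (x 1 - y 1)^2) := dist_eq_pt x y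
    rw [h1, h2] at hlt
    have key : (x 0 - (x 0 + x 1)/2)^2 + (x 1 - (x 0 + x 1)/2)^2
        ≤ (x 0 - y 0)^2 + (x 1 - y 1)^2 := by
      rw [← hy']; nlinarith [sq_nonneg (x 0 + x 1 - 2 * y 0)]
    exact absurd (Real.sqrt_le_sqrt key) (not_le_of_gt hlt)

lemma persDist_nonneg (x : Pt) : 0 ≤ persDist x := infDist_nonneg

lemma persDist_le_dist {x y : Pt} (hy : y ∈ Diag) : persDist x ≤ dist x y :=
  infDist_le_dist_of_mem hy

lemma continuous_persDist : Continuous persDist := continuous_infDist_pt _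

lemma persDist_zero_of_Diag {x : Pt} (hx : x ∈ Diag) : persDist x = 0 :=
  infDist_zero_of_mem hx

-- continuing: ρP lemmas and measurability
section Part2

variable {p : ℝ}

def Qc (x : Pt) : Pt := if x ∈ Diag then mk2 0 0 else x

lemma measurable_Qc : Measurable Qc :=
  Measurable.ite measurableSet_Diag measurable_const measurable_id

lemma rhoP_nonneg (x y : Pt) : 0 ≤ ρP x y := by
  unfold ρP
  split_ifs
  · exact le_refl 0
  · exact persDist_nonneg y
  · exact persDist_nonneg x
  · exact le_min dist_nonneg (add_nonneg (persDist_nonneg x) (persDist_nonneg y))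

lemma measurable_rhoP : Measurable (fun z : Pt × Pt => ρP z.1 z.2) := by
  unfold ρP
  have hD1 : MeasurableSet {z : Pt × Pt | z.1 ∈ Diag} := measurable_fst measurableSet_Diag
  have hD2 : MeasurableSet {z : Pt × Pt | z.2 ∈ Diag} := measurable_snd measurableSet_Diag
  have hpd1 : Measurable fun z : Pt × Pt => persDist z.1 :=
    (continuous_persDist.comp continuous_fst).measurable
  have hpd2 : Measurable fun z : Pt × Pt => persDist z.2 :=
    (continuous_persDist.comp continuous_snd).measurable
  apply Measurable.ite hD1
  · exact Measurable.ite hD2 measurable_const hpd2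
  · exact Measurable.ite hD2 hpd1
      ((continuous_dist.comp (continuous_fst.prodMk continuous_snd)).measurable.min
        (hpd1.add hpd2))

lemma measurable_ofReal_rpow (hp0 : 0 ≤ p) {f : Pt × Pt → ℝ} (hf : Measurable f) :
    Measurable (fun z => ENNReal.ofReal (f z ^ p)) :=
  ENNReal.measurable_ofReal.comp ((Real.continuous_rpow_const hp0).measurable.comp hf)

lemma measurable_Phi (hp0 : 0 ≤ p) :
    Measurable (fun z : Pt × Pt => ENNReal.ofReal (ρP z.1 z.2 ^ p)) :=
  measurable_ofReal_rpow hp0 measurable_rhoP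

lemma measurable_F (hp0 : 0 ≤ p) :
    Measurable (fun z : Pt × Pt => ENNReal.ofReal (dist z.1 z.2 ^ p)) :=
  measurable_ofReal_rpow hp0
    (continuous_dist.comp (continuous_fst.prodMk continuous_snd)).measurable

lemma rhoQQ_le_dist {x y : Pt} (h : ¬(x ∈ Diag ∧ y ∈ Diag)) :
    ρP (Qc x) (Qc y) ≤ dist x y := by
  by_cases hx : x ∈ Diag
  · by_cases hy : y ∈ Diag
    · exact absurd ⟨hx, hy⟩ h
    · -- Qc x = 0 ∈ Diag, Qc y = y ∉ Diag
      have : ρP (Qc x) (Qc y) = persDist y := by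
        unfold ρP Qc; rw [if_pos hx, if_neg hy, if_pos zero_mem_Diag, if_neg hy]
      rw [this, dist_comm]; exact persDist_le_dist hx
  · by_cases hy : y ∈ Diag
    · have : ρP (Qc x) (Qc y) = persDist x := by
        unfold ρP Qc; rw [if_neg hx, if_pos hy, if_neg hx, if_pos zero_mem_Diag]
      rw [this]; exact persDist_le_dist hy
    · have : ρP (Qc x) (Qc y) = min (dist x y) (persDist x + persDist y) := by
        unfold ρP Qc; rw [if_neg hx, if_neg hy, if_neg hx, if_neg hy]
      rw [this]; exact min_le_left _ _

lemma ofReal_rpow_mono (hp : 1 ≤ p) {a b : ℝ} (ha : 0 ≤ a) (hab : a ≤ b) :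
    ENNReal.ofReal (a ^ p) ≤ ENNReal.ofReal (b ^ p) :=
  ENNReal.ofReal_le_ofReal (Real.rpow_le_rpow ha hab (le_trans zero_le_one hp))

lemma ofReal_rpow_add_le (hp : 1 ≤ p) {a b : ℝ} (ha : 0 ≤ a) (hb : 0 ≤ b) :
    ENNReal.ofReal (a ^ p) + ENNReal.ofReal (b ^ p) ≤ ENNReal.ofReal ((a + b) ^ p) := by
  have hp0 : 0 ≤ p := le_trans zero_le_one hp
  rw [← ENNReal.ofReal_rpow_of_nonneg ha hp0, ← ENNReal.ofReal_rpow_of_nonneg hb hp0,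
    ← ENNReal.ofReal_rpow_of_nonneg (add_nonneg ha hb) hp0, ENNReal.ofReal_add ha hb]
  exact ENNReal.add_rpow_le_rpow_add _ _ hp

lemma meas_inter_UHP {μ : Measure Pt} (hμ : μ UHPᶜ = 0) {A : Set Pt}
    (hA : MeasurableSet A) : μ A = μ (A ∩ UHP) := by
  have h1 : μ (A ∩ UHP) + μ (A \ UHP) = μ A := measure_inter_add_diff A measurableSet_UHP
  have h2 : μ (A \ UHP) = 0 := measure_mono_null (diff_subset_compl A UHP) hμ
  rw [← h1, h2, add_zero]

end Part2
section Dir2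

lemma dir2 (p : ℝ) (hp : 1 ≤ p) (μ ν : Measure Pt)
    (hμ0 : μ UHPᶜ = 0) (hν0 : ν UHPᶜ = 0) (c d : ℝ≥0∞) :
    OTe p μ ν ≤ WpE p (μ + c • Measure.dirac (mk2 0 0))
      (ν + d • Measure.dirac (mk2 0 0)) := by
  have hp0 : 0 ≤ p := le_trans zero_le_one hp
  refine le_iInf₂ fun πt hπt => ?_
  obtain ⟨hfst, hsnd⟩ := hπt
  have hfst_ap : ∀ A : Set Pt, MeasurableSet A →
      πt (Prod.fst ⁻¹' A) = (μ + c • Measure.dirac (mk2 0 0)) A := fun A hA => by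
    rw [← Measure.map_apply measurable_fst hA, hfst]
  have hsnd_ap : ∀ A : Set Pt, MeasurableSet A →
      πt (Prod.snd ⁻¹' A) = (ν + d • Measure.dirac (mk2 0 0)) A := fun A hA => by
    rw [← Measure.map_apply measurable_snd hA, hsnd]
  set S : Set (Pt × Pt) :=
    {z | z.1 ∈ UHP ∧ z.2 ∈ UHP ∧ persDist z.1 + persDist z.2 < dist z.1 z.2} with hSdef
  have hSopen : IsOpen S := by
    have h1 : IsOpen {z : Pt × Pt | z.1 ∈ UHP} := isOpen_UHP.preimage continuous_fst
    have h2 : IsOpen {z : Pt × Pt | z.2 ∈ UHP} := isOpen_UHP.preimage continuous_snd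
    have h3 : IsOpen {z : Pt × Pt | persDist z.1 + persDist z.2 < dist z.1 z.2} :=
      isOpen_lt ((continuous_persDist.comp continuous_fst).add
        (continuous_persDist.comp continuous_snd))
        (continuous_dist.comp (continuous_fst.prodMk continuous_snd))
    exact h1.inter (h2.inter h3)
  have hS : MeasurableSet S := hSopen.measurableSet
  set T1 : Pt × Pt → Pt × Pt := fun z =>
    (if z.1 ∈ Diag then Pr z.2 else z.1, if z.2 ∈ Diag then Pr z.1 else z.2) with hT1def
  set T2 : Pt × Pt → Pt × Pt := fun z => (z.1, Pr z.1) with hT2def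
  set T3 : Pt × Pt → Pt × Pt := fun z => (Pr z.2, z.2) with hT3def
  have hmD1 : MeasurableSet {z : Pt × Pt | z.1 ∈ Diag} := measurable_fst measurableSet_Diag
  have hmD2 : MeasurableSet {z : Pt × Pt | z.2 ∈ Diag} := measurable_snd measurableSet_Diag
  have hPr1 : Measurable fun z : Pt × Pt => Pr z.1 := (continuous_Pr.comp continuous_fst).measurable
  have hPr2 : Measurable fun z : Pt × Pt => Pr z.2 := (continuous_Pr.comp continuous_snd).measurable
  have hT1 : Measurable T1 :=
    (Measurable.ite hmD1 hPr2 measurable_fst).prodMk (Measurable.ite hmD2 hPr1 measurable_snd)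
  have hT2 : Measurable T2 := measurable_fst.prodMk hPr1
  have hT3 : Measurable T3 := hPr2.prodMk measurable_snd
  set π : Measure (Pt × Pt) :=
    ((πt.restrict Sᶜ).map T1) + ((πt.restrict S).map T2) + ((πt.restrict S).map T3) with hπdef
  -- the good set G
  set G : Set Pt := UHP ∪ {mk2 0 0} with hGdef
  have hGmeas : MeasurableSet G := measurableSet_UHP.union (measurableSet_singleton _)
  have hGbar : G ⊆ UHPbar := by
    rintro x (hx | hx)
    · exact Or.inl hx
    · rw [mem_singleton_iff] at hx; exact Or.inr (hx ▸ zero_mem_Diag)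
  have hμtGc : (μ + c • Measure.dirac (mk2 0 0)) Gᶜ = 0 := by
    rw [Measure.add_apply, Measure.smul_apply, Measure.dirac_apply' _ hGmeas.compl]
    have h1 : μ Gᶜ = 0 := measure_mono_null (compl_subset_compl.mpr subset_union_left) hμ0
    have h2 : (Gᶜ).indicator (1 : Pt → ℝ≥0∞) (mk2 0 0) = 0 :=
      indicator_of_notMem (by simp [hGdef]) _
    rw [h1, h2, smul_zero, add_zero]
  have hνtGc : (ν + d • Measure.dirac (mk2 0 0)) Gᶜ = 0 := by
    rw [Measure.add_apply, Measure.smul_apply, Measure.dirac_apply' _ hGmeas.compl]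
    have h1 : ν Gᶜ = 0 := measure_mono_null (compl_subset_compl.mpr subset_union_left) hν0
    have h2 : (Gᶜ).indicator (1 : Pt → ℝ≥0∞) (mk2 0 0) = 0 :=
      indicator_of_notMem (by simp [hGdef]) _
    rw [h1, h2, smul_zero, add_zero]
  have hfGc : πt (Prod.fst ⁻¹' Gᶜ) = 0 := by rw [hfst_ap _ hGmeas.compl]; exact hμtGc
  have hsGc : πt (Prod.snd ⁻¹' Gᶜ) = 0 := by rw [hsnd_ap _ hGmeas.compl]; exact hνtGc
  have hGG : πt ((G ×ˢ G)ᶜ) = 0 := by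
    refine measure_mono_null (fun z hz => ?_) (measure_union_null hfGc hsGc)
    simp only [mem_compl_iff, mem_prod, not_and_or] at hz
    rcases hz with hz | hz
    · exact Or.inl hz
    · exact Or.inr hz
  have hGae : ∀ᵐ z ∂πt, z ∈ G ×ˢ G := by
    rw [ae_iff]; exact hGG
  have hGcase : ∀ x : Pt, x ∈ G → (x ∈ UHP ∧ x ∉ Diag) ∨ x = mk2 0 0 := by
    rintro x (hx | hx)
    · exact Or.inl ⟨hx, not_mem_Diag_of_UHP hx⟩
    · exact Or.inr hx
  -- admissibility
  have hAdm : π ∈ Adm μ ν := by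
    refine ⟨?_, ?_, ?_⟩
    · -- null outside UHPbar × UHPbar
      have hBB : MeasurableSet ((UHPbar ×ˢ UHPbar : Set (Pt × Pt))ᶜ) :=
        (measurableSet_UHPbar.prod measurableSet_UHPbar).compl
      rw [hπdef, Measure.add_apply, Measure.add_apply,
        Measure.map_apply hT1 hBB, Measure.map_apply hT2 hBB, Measure.map_apply hT3 hBB,
        Measure.restrict_apply (hT1 hBB), Measure.restrict_apply (hT2 hBB),
        Measure.restrict_apply (hT3 hBB)]
      have e1 : πt (T1 ⁻¹' (UHPbar ×ˢ UHPbar)ᶜ ∩ Sᶜ) = 0 := by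
        refine measure_mono_null (fun z hz => ?_) hGG
        intro hzG
        apply hz.1
        refine ⟨?_, ?_⟩
        · by_cases h : z.1 ∈ Diag
          · show (if z.1 ∈ Diag then Pr z.2 else z.1) ∈ UHPbar
            rw [if_pos h]; exact Or.inr (Pr_mem_Diag _)
          · show (if z.1 ∈ Diag then Pr z.2 else z.1) ∈ UHPbar
            rw [if_neg h]; exact hGbar hzG.1
        · by_cases h : z.2 ∈ Diag
          · show (if z.2 ∈ Diag then Pr z.1 else z.2) ∈ UHPbar
            rw [if_pos h]; exact Or.inr (Pr_mem_Diag _)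
          · show (if z.2 ∈ Diag then Pr z.1 else z.2) ∈ UHPbar
            rw [if_neg h]; exact hGbar hzG.2
      have e2 : πt (T2 ⁻¹' (UHPbar ×ˢ UHPbar)ᶜ ∩ S) = 0 := by
        refine measure_mono_null (fun z hz => ?_) hfGc
        intro hzG
        exact hz.1 ⟨hGbar hzG, Or.inr (Pr_mem_Diag _)⟩
      have e3 : πt (T3 ⁻¹' (UHPbar ×ˢ UHPbar)ᶜ ∩ S) = 0 := by
        refine measure_mono_null (fun z hz => ?_) hsGc
        intro hzG
        exact hz.1 ⟨Or.inr (Pr_mem_Diag _), hGbar hzG⟩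
      rw [e1, e2, e3]; simp
    · -- first marginal
      intro A hA hAU
      have hA' : MeasurableSet ((Prod.fst : Pt × Pt → Pt) ⁻¹' A) := measurable_fst hA
      have hAD : ∀ x ∈ A, x ∉ Diag := fun x hx => not_mem_Diag_of_UHP (hAU hx)
      rw [hπdef, Set.prod_univ, Measure.add_apply, Measure.add_apply,
        Measure.map_apply hT1 hA', Measure.map_apply hT2 hA', Measure.map_apply hT3 hA',
        Measure.restrict_apply (hT1 hA'), Measure.restrict_apply (hT2 hA'),
        Measure.restrict_apply (hT3 hA')]
      have e1 : T1 ⁻¹' (Prod.fst ⁻¹' A) = Prod.fst ⁻¹' A := by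
        ext z
        show (if z.1 ∈ Diag then Pr z.2 else z.1) ∈ A ↔ z.1 ∈ A
        by_cases h : z.1 ∈ Diag
        · rw [if_pos h]
          constructor
          · intro hmem; exact absurd (Pr_mem_Diag z.2) (hAD _ hmem)
          · intro hmem; exact absurd h (hAD _ hmem)
        · rw [if_neg h]
      have e2 : T2 ⁻¹' (Prod.fst ⁻¹' A) = Prod.fst ⁻¹' A := rfl
      have e3 : T3 ⁻¹' (Prod.fst ⁻¹' A) ∩ S = ∅ := by
        rw [eq_empty_iff_forall_notMem]
        rintro z ⟨hz1, _⟩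
        exact hAD _ hz1 (Pr_mem_Diag _)
      rw [e1, e2, e3, measure_empty, add_zero, add_comm,
        show Prod.fst ⁻¹' A ∩ Sᶜ = Prod.fst ⁻¹' A \ S from rfl,
        measure_inter_add_diff _ hS, hfst_ap A hA, Measure.add_apply, Measure.smul_apply,
        Measure.dirac_apply' _ hA,
        indicator_of_notMem (fun h0 => zero_not_mem_UHP (hAU h0)) _, smul_zero, add_zero]
    · -- second marginal
      intro B hB hBU
      have hB' : MeasurableSet ((Prod.snd : Pt × Pt → Pt) ⁻¹' B) := measurable_snd hB
      have hBD : ∀ x ∈ B, x ∉ Diag := fun x hx => not_mem_Diag_of_UHP (hBU hx)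
      rw [hπdef, show (univ : Set Pt) ×ˢ B = Prod.snd ⁻¹' B from Set.univ_prod, Measure.add_apply, Measure.add_apply,
        Measure.map_apply hT1 hB', Measure.map_apply hT2 hB', Measure.map_apply hT3 hB',
        Measure.restrict_apply (hT1 hB'), Measure.restrict_apply (hT2 hB'),
        Measure.restrict_apply (hT3 hB')]
      have e1 : T1 ⁻¹' (Prod.snd ⁻¹' B) = Prod.snd ⁻¹' B := by
        ext z
        show (if z.2 ∈ Diag then Pr z.1 else z.2) ∈ B ↔ z.2 ∈ B
        by_cases h : z.2 ∈ Diag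
        · rw [if_pos h]
          constructor
          · intro hmem; exact absurd (Pr_mem_Diag z.1) (hBD _ hmem)
          · intro hmem; exact absurd h (hBD _ hmem)
        · rw [if_neg h]
      have e2 : T2 ⁻¹' (Prod.snd ⁻¹' B) ∩ S = ∅ := by
        rw [eq_empty_iff_forall_notMem]
        rintro z ⟨hz1, _⟩
        exact hBD _ hz1 (Pr_mem_Diag _)
      have e3 : T3 ⁻¹' (Prod.snd ⁻¹' B) = Prod.snd ⁻¹' B := rfl
      rw [e1, e2, e3, measure_empty, add_zero, add_comm,
        show Prod.snd ⁻¹' B ∩ Sᶜ = Prod.snd ⁻¹' B \ S from rfl,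
        measure_inter_add_diff _ hS, hsnd_ap B hB, Measure.add_apply, Measure.smul_apply,
        Measure.dirac_apply' _ hB,
        indicator_of_notMem (fun h0 => zero_not_mem_UHP (hBU h0)) _, smul_zero, add_zero]
  -- cost bound
  have hCost : Cost p π ≤ ∫⁻ z, ENNReal.ofReal (ρP z.1 z.2 ^ p) ∂πt := by
    have hF := measurable_F (p := p) hp0
    have hpd1 : Measurable fun z : Pt × Pt => ENNReal.ofReal (persDist z.1 ^ p) :=
      measurable_ofReal_rpow hp0 (continuous_persDist.comp continuous_fst).measurable
    have eT2 : (∫⁻ z, ENNReal.ofReal (dist (T2 z).1 (T2 z).2 ^ p) ∂(πt.restrict S))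
        = ∫⁻ z in S, ENNReal.ofReal (persDist z.1 ^ p) ∂πt :=
      lintegral_congr fun z => by
        rw [show (T2 z).1 = z.1 from rfl, show (T2 z).2 = Pr z.1 from rfl,
          ← persDist_eq_dist_Pr]
    have eT3 : (∫⁻ z, ENNReal.ofReal (dist (T3 z).1 (T3 z).2 ^ p) ∂(πt.restrict S))
        = ∫⁻ z in S, ENNReal.ofReal (persDist z.2 ^ p) ∂πt :=
      lintegral_congr fun z => by
        rw [show (T3 z).1 = Pr z.2 from rfl, show (T3 z).2 = z.2 from rfl,
          dist_comm, ← persDist_eq_dist_Pr]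
    have hA : (∫⁻ z, ENNReal.ofReal (dist (T1 z).1 (T1 z).2 ^ p) ∂(πt.restrict Sᶜ))
        ≤ ∫⁻ z in Sᶜ, ENNReal.ofReal (ρP z.1 z.2 ^ p) ∂πt := by
      apply lintegral_mono_ae
      filter_upwards [ae_restrict_of_ae hGae, ae_restrict_mem hS.compl] with z hzG hzS
      rcases hGcase z.1 hzG.1 with ⟨h1U, h1D⟩ | h10 <;>
        rcases hGcase z.2 hzG.2 with ⟨h2U, h2D⟩ | h20
      · -- both in UHP
        have hd : dist z.1 z.2 ≤ persDist z.1 + persDist z.2 := by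
          by_contra hlt
          exact hzS ⟨h1U, h2U, lt_of_not_ge hlt⟩
        have hρ : ρP z.1 z.2 = dist z.1 z.2 := by
          unfold ρP; rw [if_neg h1D, if_neg h2D, min_eq_left hd]
        show ENNReal.ofReal
            (dist (if z.1 ∈ Diag then Pr z.2 else z.1) (if z.2 ∈ Diag then Pr z.1 else z.2) ^ p)
            ≤ _
        rw [if_neg h1D, if_neg h2D, hρ]
      · -- z.1 ∈ UHP, z.2 = 0
        have h2D : z.2 ∈ Diag := h20 ▸ zero_mem_Diag
        have hρ : ρP z.1 z.2 = persDist z.1 := by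
          unfold ρP; rw [if_neg h1D, if_pos h2D]
        show ENNReal.ofReal
            (dist (if z.1 ∈ Diag then Pr z.2 else z.1) (if z.2 ∈ Diag then Pr z.1 else z.2) ^ p)
            ≤ _
        rw [if_neg h1D, if_pos h2D, hρ, ← persDist_eq_dist_Pr]
      · -- z.1 = 0, z.2 ∈ UHP
        have h1D : z.1 ∈ Diag := h10 ▸ zero_mem_Diag
        have hρ : ρP z.1 z.2 = persDist z.2 := by
          unfold ρP; rw [if_pos h1D, if_neg h2D]
        show ENNReal.ofReal
            (dist (if z.1 ∈ Diag then Pr z.2 else z.1) (if z.2 ∈ Diag then Pr z.1 else z.2) ^ p)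
            ≤ _
        rw [if_pos h1D, if_neg h2D, hρ, dist_comm, ← persDist_eq_dist_Pr]
      · -- both 0
        have h1D : z.1 ∈ Diag := h10 ▸ zero_mem_Diag
        have h2D : z.2 ∈ Diag := h20 ▸ zero_mem_Diag
        have hρ : ρP z.1 z.2 = 0 := by
          unfold ρP; rw [if_pos h1D, if_pos h2D]
        show ENNReal.ofReal
            (dist (if z.1 ∈ Diag then Pr z.2 else z.1) (if z.2 ∈ Diag then Pr z.1 else z.2) ^ p)
            ≤ _
        rw [if_pos h1D, if_pos h2D, hρ, Pr_eq_self h1D, Pr_eq_self h2D, h10, h20, dist_self]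
    have hB : (∫⁻ z, ENNReal.ofReal (dist (T2 z).1 (T2 z).2 ^ p) ∂(πt.restrict S))
        + (∫⁻ z, ENNReal.ofReal (dist (T3 z).1 (T3 z).2 ^ p) ∂(πt.restrict S))
        ≤ ∫⁻ z in S, ENNReal.ofReal (ρP z.1 z.2 ^ p) ∂πt := by
      rw [eT2, eT3, ← lintegral_add_left hpd1]
      apply lintegral_mono_ae
      filter_upwards [ae_restrict_mem hS] with z hz
      obtain ⟨h1U, h2U, hlt⟩ := hz
      have h1D := not_mem_Diag_of_UHP h1U
      have h2D := not_mem_Diag_of_UHP h2U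
      have hρ : ρP z.1 z.2 = persDist z.1 + persDist z.2 := by
        unfold ρP; rw [if_neg h1D, if_neg h2D, min_eq_right hlt.le]
      rw [hρ]
      exact ofReal_rpow_add_le hp (persDist_nonneg _) (persDist_nonneg _)
    calc Cost p π
        = (∫⁻ z, ENNReal.ofReal (dist (T1 z).1 (T1 z).2 ^ p) ∂(πt.restrict Sᶜ))
          + ((∫⁻ z, ENNReal.ofReal (dist (T2 z).1 (T2 z).2 ^ p) ∂(πt.restrict S))
          + (∫⁻ z, ENNReal.ofReal (dist (T3 z).1 (T3 z).2 ^ p) ∂(πt.restrict S))) := by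
          rw [hπdef]
          unfold Cost
          rw [lintegral_add_measure, lintegral_add_measure, lintegral_map hF hT1,
            lintegral_map hF hT2, lintegral_map hF hT3, add_assoc]
      _ ≤ (∫⁻ z in Sᶜ, ENNReal.ofReal (ρP z.1 z.2 ^ p) ∂πt)
          + (∫⁻ z in S, ENNReal.ofReal (ρP z.1 z.2 ^ p) ∂πt) := add_le_add hA hB
      _ = ∫⁻ z, ENNReal.ofReal (ρP z.1 z.2 ^ p) ∂πt := by
          rw [add_comm]
          exact lintegral_add_compl _ hS
  exact iInf₂_le_of_le π hAdm hCost

end Dir2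
section Dir1

lemma EOm_eq1 : EOm = (UHP ×ˢ UHPbar) ∪ (Diag ×ˢ UHP) := by
  ext z
  simp only [EOm, UHPbar, mem_diff, mem_prod, mem_union]
  constructor
  · rintro ⟨⟨h1 | h1, h2⟩, h3⟩
    · exact Or.inl ⟨h1, h2⟩
    · rcases h2 with h2 | h2
      · exact Or.inr ⟨h1, h2⟩
      · exact absurd ⟨h1, h2⟩ h3
  · rintro (⟨h1, h2⟩ | ⟨h1, h2⟩)
    · exact ⟨⟨Or.inl h1, h2⟩, fun h => not_mem_Diag_of_UHP h1 h.1⟩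
    · exact ⟨⟨Or.inr h1, Or.inl h2⟩, fun h => not_mem_Diag_of_UHP h2 h.2⟩

lemma EOm_eq2 : EOm = (UHPbar ×ˢ UHP) ∪ (UHP ×ˢ Diag) := by
  ext z
  simp only [EOm, UHPbar, mem_diff, mem_prod, mem_union]
  constructor
  · rintro ⟨⟨h1, h2 | h2⟩, h3⟩
    · exact Or.inl ⟨h1, h2⟩
    · rcases h1 with h1 | h1
      · exact Or.inr ⟨h1, h2⟩
      · exact absurd ⟨h1, h2⟩ h3
  · rintro (⟨h1, h2⟩ | ⟨h1, h2⟩)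
    · exact ⟨⟨h1, Or.inl h2⟩, fun h => not_mem_Diag_of_UHP h2 h.2⟩
    · exact ⟨⟨Or.inl h1, Or.inr h2⟩, fun h => not_mem_Diag_of_UHP h1 h.1⟩

lemma measurableSet_EOm : MeasurableSet EOm :=
  (measurableSet_UHPbar.prod measurableSet_UHPbar).diff
    (measurableSet_Diag.prod measurableSet_Diag)

lemma Qc_preimage_inter_UHP (A : Set Pt) : Qc ⁻¹' A ∩ UHP = A ∩ UHP := by
  ext x
  simp only [mem_inter_iff, mem_preimage, and_congr_left_iff]
  intro hx
  unfold Qc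
  rw [if_neg (not_mem_Diag_of_UHP hx)]

lemma Qc_preimage_inter_Diag_of_mem {A : Set Pt} (h0 : mk2 0 0 ∈ A) :
    Qc ⁻¹' A ∩ Diag = Diag := by
  ext x
  simp only [mem_inter_iff, mem_preimage, and_iff_right_iff_imp]
  intro hx
  unfold Qc
  rw [if_pos hx]
  exact h0

lemma Qc_preimage_inter_Diag_of_not_mem {A : Set Pt} (h0 : mk2 0 0 ∉ A) :
    Qc ⁻¹' A ∩ Diag = ∅ := by
  rw [eq_empty_iff_forall_notMem]
  rintro x ⟨hxA, hxD⟩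
  rw [mem_preimage] at hxA
  unfold Qc at hxA
  rw [if_pos hxD] at hxA
  exact h0 hxA

lemma dir1 (p : ℝ) (hp : 1 ≤ p) (μ ν : Measure Pt)
    (hμ0 : μ UHPᶜ = 0) (hν0 : ν UHPᶜ = 0)
    (hμf : μ univ < ⊤) (hνf : ν univ < ⊤)
    (r : ℝ≥0∞) (hr : μ univ + ν univ ≤ r) :
    WpE p (μ + (r - μ univ) • Measure.dirac (mk2 0 0))
      (ν + (r - ν univ) • Measure.dirac (mk2 0 0)) ≤ OTe p μ ν := by
  have hp0 : 0 ≤ p := le_trans zero_le_one hp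
  refine le_iInf₂ fun π hπ => ?_
  obtain ⟨hnull, hm1, hm2⟩ := hπ
  have hμU : μ UHP = μ univ := by
    rw [meas_inter_UHP hμ0 MeasurableSet.univ, univ_inter]
  have hνU : ν UHP = ν univ := by
    rw [meas_inter_UHP hν0 MeasurableSet.univ, univ_inter]
  -- marginal evaluation against UHPbar
  have hmargF : ∀ B : Set Pt, MeasurableSet B → B ⊆ UHP → π (B ×ˢ UHPbar) = μ B := by
    intro B hB hBU
    apply le_antisymm
    · exact (measure_mono (prod_mono subset_rfl (subset_univ _))).trans
        (le_of_eq (hm1 B hB hBU))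
    · have hsub : B ×ˢ (univ : Set Pt) ⊆ (B ×ˢ UHPbar) ∪ (UHPbar ×ˢ UHPbar)ᶜ := by
        rintro ⟨x, y⟩ ⟨hx, -⟩
        by_cases hy : y ∈ UHPbar
        · exact Or.inl ⟨hx, hy⟩
        · exact Or.inr fun hmem => hy hmem.2
      calc μ B = π (B ×ˢ univ) := (hm1 B hB hBU).symm
        _ ≤ π (B ×ˢ UHPbar) + π ((UHPbar ×ˢ UHPbar)ᶜ) :=
            (measure_mono hsub).trans (measure_union_le _ _)
        _ = π (B ×ˢ UHPbar) := by rw [hnull, add_zero]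
  have hmargS : ∀ B : Set Pt, MeasurableSet B → B ⊆ UHP → π (UHPbar ×ˢ B) = ν B := by
    intro B hB hBU
    apply le_antisymm
    · exact (measure_mono (prod_mono (subset_univ _) subset_rfl)).trans
        (le_of_eq (hm2 B hB hBU))
    · have hsub : (univ : Set Pt) ×ˢ B ⊆ (UHPbar ×ˢ B) ∪ (UHPbar ×ˢ UHPbar)ᶜ := by
        rintro ⟨x, y⟩ ⟨-, hy⟩
        by_cases hx : x ∈ UHPbar
        · exact Or.inl ⟨hx, hy⟩
        · exact Or.inr fun hmem => hx hmem.1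
      calc ν B = π (univ ×ˢ B) := (hm2 B hB hBU).symm
        _ ≤ π (UHPbar ×ˢ B) + π ((UHPbar ×ˢ UHPbar)ᶜ) :=
            (measure_mono hsub).trans (measure_union_le _ _)
        _ = π (UHPbar ×ˢ B) := by rw [hnull, add_zero]
  set t := π (Diag ×ˢ UHP) with htdef
  set s := π (UHP ×ˢ Diag) with hsdef
  have hdisj1 : Disjoint (UHP ×ˢ UHPbar : Set (Pt × Pt)) (Diag ×ˢ UHP) := by
    rw [Set.disjoint_left]
    rintro ⟨x, y⟩ ⟨hx, -⟩ ⟨hx', -⟩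
    exact not_mem_Diag_of_UHP hx hx'
  have hdisj2 : Disjoint (UHPbar ×ˢ UHP : Set (Pt × Pt)) (UHP ×ˢ Diag) := by
    rw [Set.disjoint_left]
    rintro ⟨x, y⟩ ⟨-, hy⟩ ⟨-, hy'⟩
    exact not_mem_Diag_of_UHP hy hy'
  have hEOm1 : π EOm = μ univ + t := by
    rw [EOm_eq1, measure_union hdisj1 (measurableSet_Diag.prod measurableSet_UHP),
      hmargF UHP measurableSet_UHP subset_rfl, hμU]
  have hEOm2 : π EOm = ν univ + s := by
    rw [EOm_eq2, measure_union hdisj2 (measurableSet_UHP.prod measurableSet_Diag),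
      hmargS UHP measurableSet_UHP subset_rfl, hνU]
  have ht_le : t ≤ ν univ := by
    calc t ≤ π (univ ×ˢ UHP) := measure_mono (prod_mono (subset_univ _) subset_rfl)
      _ = ν UHP := hm2 UHP measurableSet_UHP subset_rfl
      _ ≤ ν univ := measure_mono (subset_univ _)
  have hs_le : s ≤ μ univ := by
    calc s ≤ π (UHP ×ˢ univ) := measure_mono (prod_mono subset_rfl (subset_univ _))
      _ = μ UHP := hm1 UHP measurableSet_UHP subset_rfl
      _ ≤ μ univ := measure_mono (subset_univ _)
  -- the transported plan
  set QQ : Pt × Pt → Pt × Pt := fun z => (Qc z.1, Qc z.2) with hQQdef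
  have hQQ : Measurable QQ :=
    (measurable_Qc.comp measurable_fst).prodMk (measurable_Qc.comp measurable_snd)
  set πt : Measure (Pt × Pt) :=
    ((π.restrict EOm).map QQ) + (r - π EOm) • Measure.dirac ((mk2 0 0, mk2 0 0) : Pt × Pt)
    with hπtdef
  have hcoup : πt ∈ Coup (μ + (r - μ univ) • Measure.dirac (mk2 0 0))
      (ν + (r - ν univ) • Measure.dirac (mk2 0 0)) := by
    constructor
    · -- first marginal
      ext A hA
      have hA' : MeasurableSet ((Prod.fst : Pt × Pt → Pt) ⁻¹' A) := measurable_fst hA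
      have hQA : MeasurableSet (Qc ⁻¹' A) := measurable_Qc hA
      rw [Measure.map_apply measurable_fst hA, hπtdef, Measure.add_apply,
        Measure.map_apply hQQ hA', Measure.restrict_apply (hQQ hA'),
        Measure.smul_apply, Measure.dirac_apply' _ hA',
        Measure.add_apply, Measure.smul_apply, Measure.dirac_apply' _ hA]
      have hpre : QQ ⁻¹' ((Prod.fst : Pt × Pt → Pt) ⁻¹' A)
          = (Prod.fst : Pt × Pt → Pt) ⁻¹' (Qc ⁻¹' A) := rfl
      have hsplit : (Prod.fst : Pt × Pt → Pt) ⁻¹' (Qc ⁻¹' A) ∩ EOm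
          = (((Qc ⁻¹' A) ∩ UHP) ×ˢ UHPbar) ∪ (((Qc ⁻¹' A) ∩ Diag) ×ˢ UHP) := by
        rw [EOm_eq1]
        ext z
        simp only [mem_inter_iff, mem_preimage, mem_union, mem_prod]
        tauto
      rw [hpre, hsplit, measure_union ?dj ((hQA.inter measurableSet_Diag).prod measurableSet_UHP)]
      case dj =>
        rw [Set.disjoint_left]
        rintro ⟨x, y⟩ ⟨⟨-, hx⟩, -⟩ ⟨⟨-, hx'⟩, -⟩
        exact not_mem_Diag_of_UHP hx hx'
      rw [Qc_preimage_inter_UHP,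
        hmargF (A ∩ UHP) (hA.inter measurableSet_UHP) inter_subset_right,
        ← meas_inter_UHP hμ0 hA]
      by_cases h0 : mk2 0 0 ∈ A
      · rw [Qc_preimage_inter_Diag_of_mem h0, ← htdef,
          indicator_of_mem (show ((mk2 0 0, mk2 0 0) : Pt × Pt) ∈ _ from h0) (1 : Pt × Pt → ℝ≥0∞),
          indicator_of_mem h0 (1 : Pt → ℝ≥0∞)]
        simp only [smul_eq_mul, Pi.one_apply, mul_one]
        rw [add_assoc]
        congr 1
        rw [hEOm1, tsub_add_eq_tsub_tsub]
        exact add_tsub_cancel_of_le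
          (ENNReal.le_sub_of_add_le_left hμf.ne ((add_le_add_right ht_le _).trans hr))
      · rw [Qc_preimage_inter_Diag_of_not_mem h0,
          indicator_of_notMem (show ((mk2 0 0, mk2 0 0) : Pt × Pt) ∉ _ from h0) (1 : Pt × Pt → ℝ≥0∞),
          indicator_of_notMem h0 (1 : Pt → ℝ≥0∞)]
        simp
    · -- second marginal
      ext B hB
      have hB' : MeasurableSet ((Prod.snd : Pt × Pt → Pt) ⁻¹' B) := measurable_snd hB
      have hQB : MeasurableSet (Qc ⁻¹' B) := measurable_Qc hB
      rw [Measure.map_apply measurable_snd hB, hπtdef, Measure.add_apply,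
        Measure.map_apply hQQ hB', Measure.restrict_apply (hQQ hB'),
        Measure.smul_apply, Measure.dirac_apply' _ hB',
        Measure.add_apply, Measure.smul_apply, Measure.dirac_apply' _ hB]
      have hpre : QQ ⁻¹' ((Prod.snd : Pt × Pt → Pt) ⁻¹' B)
          = (Prod.snd : Pt × Pt → Pt) ⁻¹' (Qc ⁻¹' B) := rfl
      have hsplit : (Prod.snd : Pt × Pt → Pt) ⁻¹' (Qc ⁻¹' B) ∩ EOm
          = (UHPbar ×ˢ ((Qc ⁻¹' B) ∩ UHP)) ∪ (UHP ×ˢ ((Qc ⁻¹' B) ∩ Diag)) := by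
        rw [EOm_eq2]
        ext z
        simp only [mem_inter_iff, mem_preimage, mem_union, mem_prod]
        tauto
      rw [hpre, hsplit, measure_union ?dj (measurableSet_UHP.prod (hQB.inter measurableSet_Diag))]
      case dj =>
        rw [Set.disjoint_left]
        rintro ⟨x, y⟩ ⟨-, ⟨-, hy⟩⟩ ⟨-, ⟨-, hy'⟩⟩
        exact not_mem_Diag_of_UHP hy hy'
      rw [Qc_preimage_inter_UHP,
        hmargS (B ∩ UHP) (hB.inter measurableSet_UHP) inter_subset_right,
        ← meas_inter_UHP hν0 hB]
      by_cases h0 : mk2 0 0 ∈ B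
      · rw [Qc_preimage_inter_Diag_of_mem h0, ← hsdef,
          indicator_of_mem (show ((mk2 0 0, mk2 0 0) : Pt × Pt) ∈ _ from h0) (1 : Pt × Pt → ℝ≥0∞),
          indicator_of_mem h0 (1 : Pt → ℝ≥0∞)]
        simp only [smul_eq_mul, Pi.one_apply, mul_one]
        rw [add_assoc]
        congr 1
        rw [hEOm2, tsub_add_eq_tsub_tsub]
        have hr' : ν univ + μ univ ≤ r := by rwa [add_comm]
        exact add_tsub_cancel_of_le
          (ENNReal.le_sub_of_add_le_left hνf.ne ((add_le_add_right hs_le _).trans hr'))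
      · rw [Qc_preimage_inter_Diag_of_not_mem h0,
          indicator_of_notMem (show ((mk2 0 0, mk2 0 0) : Pt × Pt) ∉ _ from h0) (1 : Pt × Pt → ℝ≥0∞),
          indicator_of_notMem h0 (1 : Pt → ℝ≥0∞)]
        simp
  -- cost estimate
  have hcost : (∫⁻ z, ENNReal.ofReal (ρP z.1 z.2 ^ p) ∂πt) ≤ Cost p π := by
    have hΦ := measurable_Phi (p := p) hp0
    rw [hπtdef, lintegral_add_measure, lintegral_map hΦ hQQ, lintegral_smul_measure,
      lintegral_dirac' _ hΦ]
    have hz0 : ENNReal.ofReal (ρP (mk2 0 0, mk2 0 0).1 (mk2 0 0, mk2 0 0).2 ^ p) = 0 := by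
      have : ρP (mk2 0 0) (mk2 0 0) = 0 := by
        unfold ρP; rw [if_pos zero_mem_Diag, if_pos zero_mem_Diag]
      show ENNReal.ofReal (ρP (mk2 0 0) (mk2 0 0) ^ p) = 0
      rw [this, Real.zero_rpow (by linarith : p ≠ 0), ENNReal.ofReal_zero]
    rw [hz0, smul_zero, add_zero]
    calc (∫⁻ z, ENNReal.ofReal (ρP (QQ z).1 (QQ z).2 ^ p) ∂(π.restrict EOm))
        ≤ ∫⁻ z in EOm, ENNReal.ofReal (dist z.1 z.2 ^ p) ∂π := by
          refine setLIntegral_mono' measurableSet_EOm fun z hz => ?_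
          have hnb : ¬(z.1 ∈ Diag ∧ z.2 ∈ Diag) := fun h => hz.2 h
          exact ofReal_rpow_mono hp (rhoP_nonneg _ _) (rhoQQ_le_dist hnb)
      _ ≤ Cost p π := setLIntegral_le_lintegral _ _
  exact iInf₂_le_of_le πt hcoup hcost

end Dir1
/-- for finite measures μ,ν ∈ M^p and r ≥ μ(Ω)+ν(Ω),
OT_p(μ,ν) = W_{p,ρ}(μ̃,ν̃) where μ̃ = μ + (r−μ(Ω))δ_∂Ω, ν̃ = ν + (r−ν(Ω))δ_∂Ω
are measures of common mass r on the quotient Ω̃ (with the diagonal collapsed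
to the point mk2 0 0). -/
theorem stmt12 (p : ℝ) (hp : 1 ≤ p) (μ ν : Measure Pt)
    (hμ : MemMp p μ) (hν : MemMp p ν)
    (hμf : μ univ < ⊤) (hνf : ν univ < ⊤)
    (r : ℝ≥0∞) (hr : μ univ + ν univ ≤ r) (hrf : r < ⊤) :
    OTe p μ ν ^ (1 / p) =
      (WpE p (μ + (r - μ univ) • Measure.dirac (mk2 0 0))
             (ν + (r - ν univ) • Measure.dirac (mk2 0 0))) ^ (1 / p) := by
  have key : OTe p μ ν =
      WpE p (μ + (r - μ univ) • Measure.dirac (mk2 0 0))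
        (ν + (r - ν univ) • Measure.dirac (mk2 0 0)) :=
    le_antisymm (dir2 p hp μ ν hμ.1 hν.1 (r - μ univ) (r - ν univ))
      (dir1 p hp μ ν hμ.1 hν.1 hμf hνf r hr)
  rw [key]
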